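/- (Converse part of Theorem 1.) Fix M ≥ 3 and full-support probability distributions μ ≠ π on 𝒴. For every sequence of tests δ_n : (𝒴^M)^n → {1,…,M} (n = 1, 2, …), the exponent of the maximal error probability satisfies limsup_{n→∞} −(1/n) log e_n(δ_n) ≤ 2·B(μ, π). -/

import Mathlib

open Filter Finset Topology

noncomputable section

/-- `p` is a probability distribution on the finite alphabet. -/
def IsProb {𝓨 : Type} [Fintype 𝓨] (p : 𝓨 → ℝ) : Prop :=
  (∀ y, 0 ≤ p y) ∧ ∑ y, p y = 1

/-- `p` has full support. -/
def FullSupport {𝓨 : Type} (p : 𝓨 → ℝ) : Prop := ∀ y, 0 < p y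

/-- Bhattacharyya distance `B(p,q) = -log ∑ √(p y) √(q y)`. -/
def Bhat {𝓨 : Type} [Fintype 𝓨] (p q : 𝓨 → ℝ) : ℝ :=
  - Real.log (∑ y, Real.sqrt (p y) * Real.sqrt (q y))

/-- Probability of an event under a pmf on a finite sample space. -/
def probOf {α : Type} [Fintype α] (P : α → ℝ) (A : Set α) : ℝ :=
  ∑ y, A.indicator P y

/-- Joint pmf of all observations in the one-outlier model under hypothesis `i`:
coordinate `i` is the outlier (distribution `μ`), all others typical (`π`). -/
def pOne {𝓨 : Type} [Fintype 𝓨] {M n : ℕ} (μ π : 𝓨 → ℝ) (i : Fin M)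
    (y : Fin n → Fin M → 𝓨) : ℝ :=
  ∏ k, ∏ j, (if j = i then μ else π) (y k j)

/-- Maximal error probability of a test in the one-outlier model. -/
def errOne {𝓨 : Type} [Fintype 𝓨] {M n : ℕ} (μ π : 𝓨 → ℝ)
    (δ : (Fin n → Fin M → 𝓨) → Fin M) : ℝ :=
  ⨆ i : Fin M, probOf (pOne μ π i) {y | δ y ≠ i}

section Aux
variable {𝓨 : Type} [Fintype 𝓨] [Nonempty 𝓨]

/-- Fubini for finite product spaces. -/
lemma sum_prod_pi {ι W : Type} [Fintype ι] [DecidableEq ι] [Fintype W] (h : ι → W → ℝ) :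
    ∑ y : ι → W, ∏ c, h c (y c) = ∏ c, ∑ w, h c w :=
  (Fintype.prod_sum h).symm

def P1 {M : ℕ} (μ π : 𝓨 → ℝ) (i : Fin M) (w : Fin M → 𝓨) : ℝ :=
  ∏ l, (if l = i then μ else π) (w l)

def LL {M : ℕ} (μ π : 𝓨 → ℝ) (i j : Fin M) (w : Fin M → 𝓨) : ℝ :=
  Real.log (P1 μ π i w) - Real.log (P1 μ π j w)

def r1 {M : ℕ} (μ π : 𝓨 → ℝ) (i j : Fin M) (w : Fin M → 𝓨) : ℝ :=
  Real.exp ((Real.log (P1 μ π i w) + Real.log (P1 μ π j w)) / 2)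

def Vr {M : ℕ} (μ π : 𝓨 → ℝ) (i j : Fin M) : ℝ :=
  ∑ w : Fin M → 𝓨, r1 μ π i j w * (LL μ π i j w) ^ 2

def rho (μ π : 𝓨 → ℝ) : ℝ := ∑ y, Real.sqrt (μ y) * Real.sqrt (π y)

lemma P1_pos {M : ℕ} (μ π : 𝓨 → ℝ) (hμf : FullSupport μ) (hπf : FullSupport π)
    (i : Fin M) (w : Fin M → 𝓨) : 0 < P1 μ π i w := by
  refine Finset.prod_pos fun l _ => ?_
  by_cases h : l = i <;> simp [h, hμf _, hπf _]

lemma P1_eq_left {M : ℕ} (μ π : 𝓨 → ℝ) (hμf : FullSupport μ) (hπf : FullSupport π)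
    (i j : Fin M) (w : Fin M → 𝓨) :
    P1 μ π i w = r1 μ π i j w * Real.exp (LL μ π i j w / 2) := by
  rw [r1, LL, ← Real.exp_add,
    show (Real.log (P1 μ π i w) + Real.log (P1 μ π j w)) / 2 +
      (Real.log (P1 μ π i w) - Real.log (P1 μ π j w)) / 2 = Real.log (P1 μ π i w) by ring,
    Real.exp_log (P1_pos μ π hμf hπf i w)]

lemma P1_eq_right {M : ℕ} (μ π : 𝓨 → ℝ) (hμf : FullSupport μ) (hπf : FullSupport π)
    (i j : Fin M) (w : Fin M → 𝓨) :
    P1 μ π j w = r1 μ π i j w * Real.exp (-(LL μ π i j w) / 2) := by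
  rw [r1, LL, ← Real.exp_add,
    show (Real.log (P1 μ π i w) + Real.log (P1 μ π j w)) / 2 +
      -(Real.log (P1 μ π i w) - Real.log (P1 μ π j w)) / 2 = Real.log (P1 μ π j w) by ring,
    Real.exp_log (P1_pos μ π hμf hπf j w)]

lemma exp_half (x : ℝ) (hx : 0 < x) : Real.exp (Real.log x / 2) = Real.sqrt x := by
  rw [← Real.log_sqrt hx.le, Real.exp_log (Real.sqrt_pos.2 hx)]

lemma log_P1 {M : ℕ} (μ π : 𝓨 → ℝ) (hμf : FullSupport μ) (hπf : FullSupport π)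
    (i : Fin M) (w : Fin M → 𝓨) :
    Real.log (P1 μ π i w) = ∑ l, Real.log ((if l = i then μ else π) (w l)) := by
  rw [P1]
  refine Real.log_prod fun l _ => ?_
  by_cases h : l = i <;> simp [h, (hμf _).ne', (hπf _).ne']

lemma r1_prod {M : ℕ} (μ π : 𝓨 → ℝ) (hμf : FullSupport μ) (hπf : FullSupport π)
    (i j : Fin M) (w : Fin M → 𝓨) :
    r1 μ π i j w = ∏ l, Real.exp ((Real.log ((if l = i then μ else π) (w l)) +
      Real.log ((if l = j then μ else π) (w l))) / 2) := by
  rw [r1, log_P1 μ π hμf hπf i w, log_P1 μ π hμf hπf j w, ← Finset.sum_add_distrib,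
    Finset.sum_div, Real.exp_sum]
set_option linter.unusedSectionVars false in
lemma sum_r1 {M : ℕ} (μ π : 𝓨 → ℝ) (hμ : IsProb μ) (hπ : IsProb π)
    (hμf : FullSupport μ) (hπf : FullSupport π) (i j : Fin M) (hij : i ≠ j) :
    ∑ w : Fin M → 𝓨, r1 μ π i j w = rho μ π ^ 2 := by
  classical
  simp_rw [r1_prod μ π hμf hπf i j]
  rw [sum_prod_pi (fun l a => Real.exp ((Real.log ((if l = i then μ else π) a) +
    Real.log ((if l = j then μ else π) a)) / 2))]
  have hfac : ∀ l : Fin M, (∑ w : 𝓨, Real.exp ((Real.log ((if l = i then μ else π) w) +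
      Real.log ((if l = j then μ else π) w)) / 2)) =
      if l = i then rho μ π else if l = j then rho μ π else 1 := by
    intro l
    by_cases hli : l = i
    · subst hli
      simp only [if_pos rfl, if_neg hij, rho, eq_self_iff_true, if_true]
      refine Finset.sum_congr rfl fun a _ => ?_
      rw [add_div, Real.exp_add, exp_half _ (hμf a), exp_half _ (hπf a)]
    · by_cases hlj : l = j
      · subst hlj
        simp only [if_neg hli, if_pos rfl, rho, eq_self_iff_true, if_true]
        refine Finset.sum_congr rfl fun a _ => ?_
        rw [add_div, Real.exp_add, exp_half _ (hπf a), exp_half _ (hμf a), mul_comm]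
      · simp only [if_neg hli, if_neg hlj]
        rw [show (∑ w : 𝓨, Real.exp ((Real.log (π w) + Real.log (π w)) / 2)) = ∑ w : 𝓨, π w from
          Finset.sum_congr rfl fun a _ => by
            rw [show (Real.log (π a) + Real.log (π a)) / 2 = Real.log (π a) by ring,
              Real.exp_log (hπf a)]]
        exact hπ.2
  simp_rw [hfac]
  rw [← Finset.mul_prod_erase Finset.univ _ (Finset.mem_univ i),
    ← Finset.mul_prod_erase _ _ (Finset.mem_erase.2 ⟨Ne.symm hij, Finset.mem_univ j⟩),
    if_pos rfl, if_neg (Ne.symm hij), if_pos rfl,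
    Finset.prod_eq_one fun l hl => by
      simp only [Finset.mem_erase] at hl
      rw [if_neg hl.2.1, if_neg hl.1]]
  ring
set_option linter.unusedSectionVars false in
lemma P1_swap {M : ℕ} (μ π : 𝓨 → ℝ) (i j k : Fin M) (w : Fin M → 𝓨) :
    P1 μ π k (fun l => w (Equiv.swap i j l)) = P1 μ π (Equiv.swap i j k) w := by
  simp only [P1]
  refine Fintype.prod_equiv (Equiv.swap i j)
    (fun l => (if l = k then μ else π) (w (Equiv.swap i j l)))
    (fun l => (if l = Equiv.swap i j k then μ else π) (w l)) (fun x => ?_)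
  simp only [Equiv.swap_apply_self, Equiv.apply_eq_iff_eq]

set_option linter.unusedSectionVars false in
lemma mean_zero {M : ℕ} (μ π : 𝓨 → ℝ) (i j : Fin M) :
    ∑ w : Fin M → 𝓨, r1 μ π i j w * LL μ π i j w = 0 := by
  classical
  let e : (Fin M → 𝓨) ≃ (Fin M → 𝓨) :=
    { toFun := fun w l => w (Equiv.swap i j l)
      invFun := fun w l => w (Equiv.swap i j l)
      left_inv := fun w => funext fun l => by simp
      right_inv := fun w => funext fun l => by simp }
  have h1 : ∀ w, P1 μ π i (e w) = P1 μ π j w := fun w => by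
    have := P1_swap μ π i j i w
    rwa [Equiv.swap_apply_left] at this
  have h2 : ∀ w, P1 μ π j (e w) = P1 μ π i w := fun w => by
    have := P1_swap μ π i j j w
    rwa [Equiv.swap_apply_right] at this
  have key : ∀ w, r1 μ π i j (e w) * LL μ π i j (e w) = -(r1 μ π i j w * LL μ π i j w) := by
    intro w
    simp only [r1, LL, h1, h2]
    ring_nf
  have hsum := Equiv.sum_comp e (fun w => r1 μ π i j w * LL μ π i j w)
  simp only [key, Finset.sum_neg_distrib] at hsum
  linarith

set_option linter.unusedSectionVars false in
lemma Vr_nonneg {M : ℕ} (μ π : 𝓨 → ℝ) (i j : Fin M) : 0 ≤ Vr μ π i j :=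
  Finset.sum_nonneg fun w _ => mul_nonneg (Real.exp_pos _).le (sq_nonneg _)

lemma rho_pos (μ π : 𝓨 → ℝ) (hμf : FullSupport μ) (hπf : FullSupport π) : 0 < rho μ π :=
  Finset.sum_pos (fun y _ => mul_pos (Real.sqrt_pos.2 (hμf y)) (Real.sqrt_pos.2 (hπf y)))
    Finset.univ_nonempty

set_option linter.unusedSectionVars false in
lemma sum_P1 {M : ℕ} (μ π : 𝓨 → ℝ) (hμ : IsProb μ) (hπ : IsProb π) (i : Fin M) :
    ∑ w : Fin M → 𝓨, P1 μ π i w = 1 := by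
  classical
  simp only [P1]
  rw [sum_prod_pi (fun l a => (if l = i then μ else π) a)]
  refine Finset.prod_eq_one fun l _ => ?_
  by_cases h : l = i <;> simp [h, hμ.2, hπ.2]

set_option linter.unusedSectionVars false in
lemma pOne_eq_prod {M n : ℕ} (μ π : 𝓨 → ℝ) (i : Fin M) (y : Fin n → Fin M → 𝓨) :
    pOne μ π i y = ∏ k, P1 μ π i (y k) := rfl

set_option linter.unusedSectionVars false in
lemma pOne_nonneg {M n : ℕ} (μ π : 𝓨 → ℝ) (hμ : IsProb μ) (hπ : IsProb π) (i : Fin M)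
    (y : Fin n → Fin M → 𝓨) : 0 ≤ pOne μ π i y :=
  Finset.prod_nonneg fun k _ => Finset.prod_nonneg fun l _ => by
    by_cases h : l = i <;> simp [h, hμ.1 _, hπ.1 _]

set_option linter.unusedSectionVars false in
lemma sum_pOne {M n : ℕ} (μ π : 𝓨 → ℝ) (hμ : IsProb μ) (hπ : IsProb π) (i : Fin M) :
    ∑ y : Fin n → Fin M → 𝓨, pOne μ π i y = 1 := by
  classical
  simp only [pOne_eq_prod]
  rw [sum_prod_pi (fun _ w => P1 μ π i w)]
  refine Finset.prod_eq_one fun k _ => sum_P1 μ π hμ hπ i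

lemma sum_le_probOf {α : Type} [Fintype α] (P : α → ℝ) (hP : ∀ y, 0 ≤ P y) (A : Set α)
    (F : Finset α) (hF : ∀ y ∈ F, y ∈ A) : ∑ y ∈ F, P y ≤ probOf P A := by
  rw [probOf]
  calc ∑ y ∈ F, P y = ∑ y ∈ F, A.indicator P y :=
        Finset.sum_congr rfl fun y hy => (Set.indicator_of_mem (hF y hy) P).symm
    _ ≤ ∑ y, A.indicator P y :=
        Finset.sum_le_sum_of_subset_of_nonneg (Finset.subset_univ F)
          (fun y _ _ => Set.indicator_nonneg (fun z _ => hP z) y)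

lemma probOf_nonneg {α : Type} [Fintype α] (P : α → ℝ) (hP : ∀ y, 0 ≤ P y) (A : Set α) :
    0 ≤ probOf P A :=
  Finset.sum_nonneg fun y _ => Set.indicator_nonneg (fun z _ => hP z) y

lemma probOf_le_sum {α : Type} [Fintype α] (P : α → ℝ) (hP : ∀ y, 0 ≤ P y) (A : Set α) :
    probOf P A ≤ ∑ y, P y :=
  Finset.sum_le_sum fun y _ => Set.indicator_apply_le' (fun _ => le_rfl) (fun _ => hP y)

set_option linter.unusedSectionVars false in
lemma le_errOne {M n : ℕ} (μ π : 𝓨 → ℝ) (δ : (Fin n → Fin M → 𝓨) → Fin M) (i : Fin M) :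
    probOf (pOne μ π i) {y | δ y ≠ i} ≤ errOne μ π δ :=
  le_ciSup (f := fun i => probOf (pOne μ π i) {y | δ y ≠ i})
    (Set.Finite.bddAbove (Set.finite_range _)) i

set_option linter.unusedSectionVars false in
lemma errOne_le_one {M n : ℕ} (hM : 0 < M) (μ π : 𝓨 → ℝ) (hμ : IsProb μ) (hπ : IsProb π)
    (δ : (Fin n → Fin M → 𝓨) → Fin M) : errOne μ π δ ≤ 1 := by
  have : Nonempty (Fin M) := ⟨⟨0, hM⟩⟩
  refine ciSup_le fun i => ?_
  exact (probOf_le_sum _ (pOne_nonneg μ π hμ hπ i) _).trans_eq (sum_pOne μ π hμ hπ i)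

set_option linter.unusedSectionVars false in
lemma errOne_nonneg {M n : ℕ} (hM : 0 < M) (μ π : 𝓨 → ℝ) (hμ : IsProb μ) (hπ : IsProb π)
    (δ : (Fin n → Fin M → 𝓨) → Fin M) : 0 ≤ errOne μ π δ :=
  (probOf_nonneg _ (pOne_nonneg μ π hμ hπ ⟨0, hM⟩) _).trans (le_errOne μ π δ ⟨0, hM⟩)
set_option linter.unusedSectionVars false in
set_option maxHeartbeats 1000000 in
lemma key {M : ℕ} (μ π : 𝓨 → ℝ) (hμ : IsProb μ) (hπ : IsProb π)
    (hμf : FullSupport μ) (hπf : FullSupport π)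
    (i j : Fin M) (hij : i ≠ j) (n : ℕ) (hn : 0 < n)
    (δ : (Fin n → Fin M → 𝓨) → Fin M) (ε : ℝ) (hε : 0 < ε)
    (hbig : Vr μ π i j ≤ ε ^ 2 * n * (rho μ π) ^ 2 / 2) :
    (rho μ π) ^ (2 * n) * Real.exp (-(ε * n) / 2) / 4 ≤ errOne μ π δ := by
  classical
  obtain ⟨m, rfl⟩ : ∃ m, n = m + 1 := ⟨n - 1, (Nat.succ_pred_eq_of_pos hn).symm⟩
  push_cast at hbig ⊢
  set ρ := rho μ π with hρdef
  have hρ : 0 < ρ := rho_pos μ π hμf hπf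
  set G : (Fin (m+1) → Fin M → 𝓨) → ℝ := fun y => ∏ k, r1 μ π i j (y k) with hG
  set S : (Fin (m+1) → Fin M → 𝓨) → ℝ := fun y => ∑ k, LL μ π i j (y k) with hS
  have hGpos : ∀ y, 0 < G y := fun y => Finset.prod_pos fun k _ => Real.exp_pos _
  -- pointwise identities
  have hPy : ∀ y, pOne μ π i y = G y * Real.exp (S y / 2) := by
    intro y
    rw [pOne_eq_prod]
    simp_rw [P1_eq_left μ π hμf hπf i j]
    rw [Finset.prod_mul_distrib, ← Real.exp_sum, ← Finset.sum_div]
  have hQy : ∀ y, pOne μ π j y = G y * Real.exp (-(S y) / 2) := by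
    intro y
    rw [pOne_eq_prod]
    simp_rw [P1_eq_right μ π hμf hπf i j]
    rw [Finset.prod_mul_distrib, ← Real.exp_sum]
    congr 2
    rw [hS, ← Finset.sum_neg_distrib, Finset.sum_div]
  -- first moment
  have hsum_r1 : ∑ w : Fin M → 𝓨, r1 μ π i j w = ρ ^ 2 := sum_r1 μ π hμ hπ hμf hπf i j hij
  have hsumG : ∑ y : Fin (m+1) → Fin M → 𝓨, G y = (ρ ^ 2) ^ (m+1) := by
    rw [hG, sum_prod_pi (fun _ w => r1 μ π i j w)]
    simp [hsum_r1]
  -- second moment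
  have hsumGS2 : ∑ y : Fin (m+1) → Fin M → 𝓨, G y * S y ^ 2
      = (m+1) * Vr μ π i j * (ρ ^ 2) ^ m := by
    have expand : ∀ y : Fin (m+1) → Fin M → 𝓨, G y * S y ^ 2 =
        ∑ k : Fin (m+1), ∑ l : Fin (m+1), ∏ c : Fin (m+1),
          (r1 μ π i j (y c) * ((if c = k then LL μ π i j (y c) else 1) *
            (if c = l then LL μ π i j (y c) else 1))) := by
      intro y
      have h1 : S y ^ 2 = ∑ k : Fin (m+1), ∑ l : Fin (m+1), LL μ π i j (y k) * LL μ π i j (y l) := by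
        rw [sq, hS, Finset.sum_mul_sum]
      rw [h1, Finset.mul_sum]
      refine Finset.sum_congr rfl fun k _ => ?_
      rw [Finset.mul_sum]
      refine Finset.sum_congr rfl fun l _ => ?_
      rw [Finset.prod_mul_distrib, Finset.prod_mul_distrib]
      congr 1
      congr 1
      · simp [Finset.prod_ite_eq']
      · simp [Finset.prod_ite_eq']
    have inner : ∀ k l : Fin (m+1), (∑ y : Fin (m+1) → Fin M → 𝓨, ∏ c : Fin (m+1),
        (r1 μ π i j (y c) * ((if c = k then LL μ π i j (y c) else 1) *
          (if c = l then LL μ π i j (y c) else 1))))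
        = if k = l then Vr μ π i j * (ρ ^ 2) ^ m else 0 := by
      intro k l
      rw [sum_prod_pi (fun c w => r1 μ π i j w * ((if c = k then LL μ π i j w else 1) *
        (if c = l then LL μ π i j w else 1)))]
      by_cases hkl : k = l
      · subst hkl
        rw [if_pos rfl]
        have hfac : ∀ c : Fin (m+1), (∑ w : Fin M → 𝓨, r1 μ π i j w *
            ((if c = k then LL μ π i j w else 1) * (if c = k then LL μ π i j w else 1)))
            = if c = k then Vr μ π i j else ρ ^ 2 := by
          intro c
          by_cases hc : c = k
          · simp only [hc, eq_self_iff_true, if_true, Vr]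
            exact Finset.sum_congr rfl fun w _ => by ring
          · simp only [if_neg hc]
            simpa using hsum_r1
        simp_rw [hfac]
        rw [← Finset.mul_prod_erase Finset.univ _ (Finset.mem_univ k), if_pos rfl]
        congr 1
        rw [Finset.prod_congr rfl (fun c hc => if_neg (Finset.mem_erase.1 hc).1),
          Finset.prod_const, Finset.card_erase_of_mem (Finset.mem_univ k),
          Finset.card_univ, Fintype.card_fin]
        congr 1
      · rw [if_neg hkl]
        refine Finset.prod_eq_zero (Finset.mem_univ k) ?_
        have heq : (∑ w : Fin M → 𝓨, r1 μ π i j w * ((if k = k then LL μ π i j w else 1) *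
            (if k = l then LL μ π i j w else 1))) = ∑ w, r1 μ π i j w * LL μ π i j w := by
          refine Finset.sum_congr rfl fun w _ => ?_
          rw [if_pos rfl, if_neg hkl, mul_one]
        exact heq.trans (mean_zero μ π i j)
    have expand2 : (∑ y : Fin (m+1) → Fin M → 𝓨, G y * S y ^ 2)
        = ∑ k : Fin (m+1), ∑ l : Fin (m+1), ∑ y : Fin (m+1) → Fin M → 𝓨, ∏ c : Fin (m+1),
          (r1 μ π i j (y c) * ((if c = k then LL μ π i j (y c) else 1) *
            (if c = l then LL μ π i j (y c) else 1))) := by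
      simp_rw [expand]
      rw [Finset.sum_comm]
      exact Finset.sum_congr rfl fun k _ => Finset.sum_comm
    rw [expand2]
    simp_rw [inner]
    simp only [Finset.sum_ite_eq, Finset.mem_univ, if_true, Finset.sum_const,
      Finset.card_univ, Fintype.card_fin, nsmul_eq_mul]
    push_cast
    ring
  -- Chebyshev
  set E : Finset (Fin (m+1) → Fin M → 𝓨) := Finset.univ.filter (fun y => |S y| ≤ ε * (m+1)) with hE
  have cheb : (ε * (m+1)) ^ 2 * ∑ y ∈ Finset.univ.filter (fun y => ¬ |S y| ≤ ε * (m+1)), G y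
      ≤ ∑ y : Fin (m+1) → Fin M → 𝓨, G y * S y ^ 2 := by
    rw [Finset.mul_sum]
    calc ∑ y ∈ Finset.univ.filter (fun y => ¬ |S y| ≤ ε * (m+1)), (ε * (m+1)) ^ 2 * G y
        ≤ ∑ y ∈ Finset.univ.filter (fun y => ¬ |S y| ≤ ε * (m+1)), G y * S y ^ 2 := by
          refine Finset.sum_le_sum fun y hy => ?_
          have h1 : ε * (m+1) < |S y| := lt_of_not_ge (Finset.mem_filter.1 hy).2
          have h2 : (ε * (m+1)) ^ 2 ≤ S y ^ 2 := by
            rw [← sq_abs (S y)]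
            exact pow_le_pow_left₀ (by positivity) h1.le 2
          nlinarith [(hGpos y).le]
      _ ≤ ∑ y : Fin (m+1) → Fin M → 𝓨, G y * S y ^ 2 :=
          Finset.sum_le_sum_of_subset_of_nonneg (Finset.filter_subset _ _)
            fun y _ _ => mul_nonneg (hGpos y).le (sq_nonneg _)
  have hnpos : (0:ℝ) < (m+1) := by positivity
  have hpow : (0:ℝ) < (ρ ^ 2) ^ m := by positivity
  have hEG : (ρ ^ 2) ^ (m+1) / 2 ≤ ∑ y ∈ E, G y := by
    have hsplit : ∑ y ∈ E, G y + ∑ y ∈ Finset.univ.filter (fun y => ¬ |S y| ≤ ε * (m+1)), G y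
        = (ρ ^ 2) ^ (m+1) := by
      rw [hE, Finset.sum_filter_add_sum_filter_not, hsumG]
    have htail : ∑ y ∈ Finset.univ.filter (fun y => ¬ |S y| ≤ ε * (m+1)), G y
        ≤ (ρ ^ 2) ^ (m+1) / 2 := by
      have hb1 : ∑ y : Fin (m+1) → Fin M → 𝓨, G y * S y ^ 2 ≤ (ε*(m+1))^2 * ((ρ^2)^(m+1)/2) := by
        rw [hsumGS2]
        have h2 : ((m+1):ℝ) * (ε ^ 2 * (m+1) * ρ ^ 2 / 2) * (ρ ^ 2) ^ m
            = (ε*(m+1))^2 * ((ρ^2)^(m+1) / 2) := by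
          have hpownm : ((ρ:ℝ) ^ 2) ^ (m+1) = (ρ ^ 2) ^ m * ρ ^ 2 := by rw [← pow_succ]
          rw [hpownm]; ring
        rw [← h2]
        exact mul_le_mul_of_nonneg_right (mul_le_mul_of_nonneg_left hbig hnpos.le) hpow.le
      exact le_of_mul_le_mul_left (cheb.trans hb1) (by positivity)
    linarith
  -- lower bounds on error probabilities
  set c : ℝ := Real.exp (-(ε * (m+1)) / 2) with hc
  have hcpos : 0 < c := Real.exp_pos _
  have hbound1 : ∑ y ∈ E.filter (fun y => ¬ δ y = i), G y * c
      ≤ probOf (pOne μ π i) {y | δ y ≠ i} := by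
    refine le_trans ?_ (sum_le_probOf _ (pOne_nonneg μ π hμ hπ i) _
      (E.filter (fun y => ¬ δ y = i)) ?_)
    · refine Finset.sum_le_sum fun y hy => ?_
      have hyE : |S y| ≤ ε * (m+1) :=
        (Finset.mem_filter.1 (Finset.mem_filter.1 hy).1).2
      rw [hPy y, hc]
      have hle : -(ε * (m+1)) / 2 ≤ S y / 2 := by
        have := (abs_le.1 hyE).1; linarith
      exact mul_le_mul_of_nonneg_left (Real.exp_le_exp.2 hle) (hGpos y).le
    · intro y hy
      exact (Finset.mem_filter.1 hy).2
  have hbound2 : ∑ y ∈ E.filter (fun y => δ y = i), G y * c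
      ≤ probOf (pOne μ π j) {y | δ y ≠ j} := by
    refine le_trans ?_ (sum_le_probOf _ (pOne_nonneg μ π hμ hπ j) _
      (E.filter (fun y => δ y = i)) ?_)
    · refine Finset.sum_le_sum fun y hy => ?_
      have hyE : |S y| ≤ ε * (m+1) :=
        (Finset.mem_filter.1 (Finset.mem_filter.1 hy).1).2
      rw [hQy y, hc]
      have hle : -(ε * (m+1)) / 2 ≤ -(S y) / 2 := by
        have := (abs_le.1 hyE).2; linarith
      exact mul_le_mul_of_nonneg_left (Real.exp_le_exp.2 hle) (hGpos y).le
    · intro y hy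
      have hyi : δ y = i := (Finset.mem_filter.1 hy).2
      simp only [Set.mem_setOf_eq, hyi]
      exact hij
  have hsplitE : ∑ y ∈ E.filter (fun y => δ y = i), G y * c
      + ∑ y ∈ E.filter (fun y => ¬ δ y = i), G y * c = ∑ y ∈ E, G y * c :=
    Finset.sum_filter_add_sum_filter_not E _ _
  have herr1 := le_errOne μ π δ i
  have herr2 := le_errOne μ π δ j
  have hEc : (ρ ^ 2) ^ (m+1) / 2 * c ≤ ∑ y ∈ E, G y * c := by
    rw [← Finset.sum_mul]
    exact mul_le_mul_of_nonneg_right hEG hcpos.le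
  have hpm : ρ ^ (2*(m+1)) = (ρ^2)^(m+1) := by rw [pow_mul]
  rw [hpm]
  linarith

end Aux

/-- converse part of Theorem 1.  For every sequence of tests
in the one-outlier model, the exponent of the maximal error probability
satisfies `limsup_n -(1/n) log e_n(δ_n) ≤ 2·B(μ,π)`. -/
theorem statement3 (𝓨 : Type) [Fintype 𝓨] [Nonempty 𝓨]
    (M : ℕ) (hM : 3 ≤ M)
    (μ π : 𝓨 → ℝ) (hμ : IsProb μ) (hπ : IsProb π)
    (hμf : FullSupport μ) (hπf : FullSupport π) (hne : μ ≠ π)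
    (δ : (n : ℕ) → (Fin n → Fin M → 𝓨) → Fin M) :
    Filter.limsup (fun n : ℕ => -(1 / (n : ℝ)) * Real.log (errOne μ π (δ n)))
      atTop ≤ 2 * Bhat μ π := by
  classical
  have hρ : 0 < rho μ π := rho_pos μ π hμf hπf
  have hBr : Bhat μ π = - Real.log (rho μ π) := rfl
  have hM0 : 0 < M := by omega
  set i : Fin M := ⟨0, by omega⟩ with hidef
  set j : Fin M := ⟨1, by omega⟩ with hjdef
  have hij : i ≠ j := by simp [hidef, hjdef, Fin.ext_iff]
  have hf0 : ∀ n : ℕ, 0 ≤ -(1 / (n : ℝ)) * Real.log (errOne μ π (δ n)) := by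
    intro n
    rcases Nat.eq_zero_or_pos n with h | h
    · simp [h]
    · have e1 : errOne μ π (δ n) ≤ 1 := errOne_le_one hM0 μ π hμ hπ (δ n)
      have e0 : 0 ≤ errOne μ π (δ n) := errOne_nonneg hM0 μ π hμ hπ (δ n)
      have hlog : Real.log (errOne μ π (δ n)) ≤ 0 := Real.log_nonpos e0 e1
      have h1n : (0:ℝ) ≤ 1 / n := by positivity
      have heq : -(1 / (n:ℝ)) * Real.log (errOne μ π (δ n))
          = (1/n) * (-(Real.log (errOne μ π (δ n)))) := by ring
      rw [heq]
      exact mul_nonneg h1n (by linarith)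
  refine le_of_forall_pos_le_add fun ε hε => ?_
  refine Filter.limsup_le_of_le (Filter.isCoboundedUnder_le_of_le atTop hf0) ?_
  obtain ⟨N, hN⟩ := exists_nat_ge (max (2 * Vr μ π i j / (ε ^ 2 * (rho μ π) ^ 2))
    (2 * Real.log 4 / ε))
  rw [Filter.eventually_atTop]
  refine ⟨max N 1, fun n hn => ?_⟩
  have hn1 : 1 ≤ n := le_trans (le_max_right _ _) hn
  have hnR : max (2 * Vr μ π i j / (ε ^ 2 * (rho μ π) ^ 2)) (2 * Real.log 4 / ε) ≤ (n:ℝ) :=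
    hN.trans (Nat.cast_le.2 (le_trans (le_max_left _ _) hn))
  have hnpos : (0:ℝ) < n := by exact_mod_cast hn1
  have hbig : Vr μ π i j ≤ ε ^ 2 * n * (rho μ π) ^ 2 / 2 := by
    have h := (le_max_left _ _).trans hnR
    rw [div_le_iff₀ (by positivity)] at h
    nlinarith
  have hkey := key μ π hμ hπ hμf hπf i j hij n (by omega) (δ n) ε hε hbig
  have hcpos : (0:ℝ) < (rho μ π) ^ (2*n) * Real.exp (-(ε * n) / 2) / 4 := by positivity
  have hlog := Real.log_le_log hcpos hkey
  have hlogval : Real.log ((rho μ π) ^ (2*n) * Real.exp (-(ε * n) / 2) / 4)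
      = 2 * n * Real.log (rho μ π) + (-(ε * n) / 2) - Real.log 4 := by
    rw [Real.log_div (by positivity) (by norm_num),
      Real.log_mul (by positivity) (Real.exp_ne_zero _),
      Real.log_pow, Real.log_exp]
    push_cast
    ring
  rw [hlogval] at hlog
  have hc1 : -(1 / (n:ℝ)) ≤ 0 := by
    have : (0:ℝ) ≤ 1 / n := by positivity
    linarith
  have hmain : -(1 / (n:ℝ)) * Real.log (errOne μ π (δ n))
      ≤ -(1 / (n:ℝ)) * (2 * n * Real.log (rho μ π) + (-(ε * n) / 2) - Real.log 4) :=
    mul_le_mul_of_nonpos_left hlog hc1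
  have hrhs : -(1 / (n:ℝ)) * (2 * n * Real.log (rho μ π) + (-(ε * n) / 2) - Real.log 4)
      = -2 * Real.log (rho μ π) + ε / 2 + Real.log 4 / n := by
    field_simp
    ring
  have hlog4 : Real.log 4 / n ≤ ε / 2 := by
    have h := (le_max_right _ _).trans hnR
    rw [div_le_iff₀ hε] at h
    rw [div_le_iff₀ hnpos]
    nlinarith
  rw [hrhs] at hmain
  rw [hBr]
  linarith
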